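/- Under the Kustin–Miller unprojection hypotheses: if u₁, …, u_r ∈ O_X satisfy Σ u_i f_i = 0, then Σ u_i g_i = 0, where g_i = s̃(f_i). Moreover, if h = a_n S^n + ⋯ + a₀ ∈ O_X[S] satisfies t·h ∈ (S f_i − g_i) for some element t ∈ O_X that is both O_X-regular and O_X/I_D-regular, then a_n ∈ I_D = (f₁,…,f_r). -/

import Mathlib

universe u

open CategoryTheory in
/-- Gorenstein local ring, via finiteness of the injective dimension of `R`
over itself (Baer-type criterion). -/
def IsGorensteinLocalRing (R : Type u) [CommRing R] : Prop :=
  IsLocalRing R ∧ IsNoetherianRing R ∧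
    ∃ n : ℕ, ∀ I : Ideal R,
      Subsingleton (((Ext R (ModuleCat.{u} R) (n + 1)).obj
        (Opposite.op (ModuleCat.of R (R ⧸ I)))).obj (ModuleCat.of R R))

/-- The height (codimension) of an ideal. -/
noncomputable def idealHeight {R : Type u} [CommRing R] (I : Ideal R) : ℕ∞ :=
  ⨅ (p : PrimeSpectrum R) (_ : I ≤ p.asIdeal), Order.height p

/-- under the Kustin--Miller hypotheses: (1) any relation
`Σ u_i f_i = 0` yields `Σ u_i g_i = 0`; (2) if `t` is both `O`- and
`O/I`-regular and `t·h ∈ (S f_i - g_i)`, then the leading coefficient of `h`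
lies in `I = (f_1, …, f_r)`. -/
theorem relations_and_induction_step
    {O : Type u} [CommRing O]
    (hGor : IsGorensteinLocalRing O)
    {r : ℕ} (f : Fin r → O) (I : Ideal O) (hI : I = Ideal.span (Set.range f))
    (hht : idealHeight I = 1)
    (hGorD : IsGorensteinLocalRing (O ⧸ I))
    (stilde : I →ₗ[O] O) (hinj : Function.Injective stilde)
    (g : Fin r → O) (hg : ∀ j, g j = stilde ⟨f j, hI ▸ Ideal.subset_span ⟨j, rfl⟩⟩) :
    (∀ u : Fin r → O, (∑ i, u i * f i) = 0 → (∑ i, u i * g i) = 0) ∧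
    (∀ (h : Polynomial O) (t : O), t ∈ nonZeroDivisors O →
      Ideal.Quotient.mk I t ∈ nonZeroDivisors (O ⧸ I) →
      Polynomial.C t * h ∈ Ideal.span (Set.range fun j =>
        Polynomial.C (f j) * Polynomial.X - Polynomial.C (g j)) →
      h.leadingCoeff ∈ I) := by
  classical
  have memI : ∀ j, f j ∈ I := fun j => hI ▸ Ideal.subset_span ⟨j, rfl⟩
  set F : Fin r → I := fun j => ⟨f j, memI j⟩ with hF
  have part1 : ∀ u : Fin r → O, (∑ i, u i * f i) = 0 → (∑ i, u i * g i) = 0 := by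
    intro u hu
    have h1 : ∑ i, u i * g i = stilde (∑ i, u i • F i) := by
      rw [map_sum]
      refine Finset.sum_congr rfl fun i _ => ?_
      rw [map_smul, smul_eq_mul, hg i]
    have h2 : (∑ i, u i • F i) = 0 := by
      ext
      push_cast
      simpa [F] using hu
    rw [h1, h2, map_zero]
  refine ⟨part1, ?_⟩
  intro h t ht htI hmem
  obtain ⟨p, hp⟩ := (Submodule.mem_span_range_iff_exists_fun (Polynomial O)).mp hmem
  simp only [smul_eq_mul] at hp
  set n := h.natDegree with hn
  set c : ℕ → O := fun k => ∑ j, (p j).coeff k * f j with hc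
  set d : ℕ → O := fun k => ∑ j, (p j).coeff k * g j with hd
  have hcd : ∀ k, c k = 0 → d k = 0 := fun k hk => part1 _ hk
  have hterm : ∀ (j : Fin r) (m : ℕ),
      (p j * (Polynomial.C (f j) * Polynomial.X - Polynomial.C (g j))).coeff (m + 1)
        = (p j).coeff m * f j - (p j).coeff (m + 1) * g j := by
    intro j m
    rw [mul_sub, Polynomial.coeff_sub, ← mul_assoc, Polynomial.coeff_mul_X,
      Polynomial.coeff_mul_C, Polynomial.coeff_mul_C]
  have hcoeff : ∀ m : ℕ, t * h.coeff (m + 1) = c m - d (m + 1) := by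
    intro m
    have e := congrArg (fun q => Polynomial.coeff q (m + 1)) hp
    simp only [Polynomial.finset_sum_coeff, Polynomial.coeff_C_mul] at e
    calc t * h.coeff (m + 1)
        = ∑ j, (p j * (Polynomial.C (f j) * Polynomial.X - Polynomial.C (g j))).coeff (m + 1) :=
          e.symm
      _ = ∑ j, ((p j).coeff m * f j - (p j).coeff (m + 1) * g j) :=
          Finset.sum_congr rfl fun j _ => hterm j m
      _ = c m - d (m + 1) := by rw [Finset.sum_sub_distrib]
  have hcoeff0 : t * h.coeff 0 = - d 0 := by
    have e := congrArg (fun q => Polynomial.coeff q 0) hp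
    simp only [Polynomial.finset_sum_coeff, Polynomial.coeff_C_mul] at e
    have : ∀ j : Fin r,
        (p j * (Polynomial.C (f j) * Polynomial.X - Polynomial.C (g j))).coeff 0
          = - ((p j).coeff 0 * g j) := by
      intro j
      rw [mul_sub, Polynomial.coeff_sub, ← mul_assoc, Polynomial.mul_coeff_zero,
        Polynomial.coeff_mul_C, Polynomial.coeff_X_zero, mul_zero, zero_sub,
        Polynomial.coeff_mul_C]
    calc t * h.coeff 0
        = ∑ j, (p j * (Polynomial.C (f j) * Polynomial.X - Polynomial.C (g j))).coeff 0 := e.symm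
      _ = ∑ j, - ((p j).coeff 0 * g j) := Finset.sum_congr rfl fun j _ => this j
      _ = - d 0 := by rw [Finset.sum_neg_distrib]
  set B := (Finset.univ.sup fun j : Fin r => (p j).natDegree) + 1 with hB
  have hcB : ∀ k, B ≤ k → c k = 0 := by
    intro k hk
    refine Finset.sum_eq_zero fun j _ => ?_
    rw [Polynomial.coeff_eq_zero_of_natDegree_lt, zero_mul]
    have : (p j).natDegree ≤ Finset.univ.sup fun j : Fin r => (p j).natDegree :=
      Finset.le_sup (f := fun j : Fin r => (p j).natDegree) (Finset.mem_univ j)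
    omega
  have key : ∀ i k, n ≤ k → B ≤ k + i → c k = 0 := by
    intro i
    induction i with
    | zero => intro k hk hBk; exact hcB k (by omega)
    | succ i ih =>
      intro k hk hBk
      have h1 : c (k + 1) = 0 := ih (k + 1) (by omega) (by omega)
      have h2 : d (k + 1) = 0 := hcd _ h1
      have h3 := hcoeff k
      rw [Polynomial.coeff_eq_zero_of_natDegree_lt (by omega), mul_zero, h2, sub_zero] at h3
      exact h3.symm
  have hcn : ∀ k, n ≤ k → c k = 0 := fun k hk => key B k hk (by omega)
  have hcI : ∀ k, c k ∈ I := fun k =>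
    Ideal.sum_mem _ fun j _ => Ideal.mul_mem_left _ _ (memI j)
  have htan : t * h.coeff n ∈ I := by
    rcases Nat.eq_zero_or_pos n with h0 | hpos
    · rw [h0, hcoeff0, hcd 0 (hcn 0 (by omega))]
      simp
    · obtain ⟨m, hm⟩ := Nat.exists_eq_succ_of_ne_zero (Nat.pos_iff_ne_zero.mp hpos)
      rw [hm, hcoeff m, hcd (m + 1) (hcn (m + 1) (by omega)), sub_zero]
      exact hcI m
  have hq : Ideal.Quotient.mk I t * Ideal.Quotient.mk I (h.coeff n) = 0 := by
    rw [← map_mul, Ideal.Quotient.eq_zero_iff_mem]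
    exact htan
  have : Ideal.Quotient.mk I (h.coeff n) = 0 := htI.2 _ (by rw [mul_comm] at hq; exact hq)
  rw [Polynomial.leadingCoeff]
  exact (Ideal.Quotient.eq_zero_iff_mem).mp this
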